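/- The initial critical exponent of the infinite Tribonacci word T (the supremum of exponents of its nonempty prefixes) equals ρ - 1, where ρ = 5/2 + α^{-1} + (1/2)α^{-2} and α is the real root of x³ - x² - x - 1. -/

import Mathlib

/-- The Tribonacci morphism: 0 → 01, 1 → 02, 2 → 0. -/
def tribMap (c : ℕ) : List ℕ := if c = 0 then [0,1] else if c = 1 then [0,2] else [0]

/-- Iterates of the Tribonacci morphism on the word `0`. -/
def tribIter : ℕ → List ℕ
  | 0 => [0]
  | k+1 => (tribIter k).flatMap tribMap

/-- The infinite Tribonacci word, the fixed point starting with 0 of 0→01, 1→02, 2→0. -/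
def tribWord (n : ℕ) : ℕ := (tribIter (n+1)).getD n 0

/-- The Tribonacci numbers. -/
def trib : ℕ → ℕ
  | 0 => 0
  | 1 => 1
  | 2 => 1
  | n+3 => trib (n+2) + trib (n+1) + trib n

/-- `p` is a period of the length-`n` prefix of the Tribonacci word. -/
def IsPrefixPeriod (n p : ℕ) : Prop :=
  0 < p ∧ ∀ k, k + p < n → tribWord k = tribWord (k + p)

/-- The set of exponents of nonempty prefixes of the Tribonacci word. -/
def tribPrefixExponents : Set ℝ :=
  {e | ∃ n p : ℕ, 0 < n ∧ IsLeast {q | IsPrefixPeriod n q} p ∧ e = (n : ℝ) / p}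

namespace TCE

/-- σ as list map -/
abbrev sig (u : List ℕ) : List ℕ := u.flatMap tribMap

lemma sig_append (u v : List ℕ) : sig (u ++ v) = sig u ++ sig v := List.flatMap_append ..

lemma tribIter_succ (k : ℕ) : tribIter (k+1) = sig (tribIter k) := rfl

lemma tribIter_add3 (m : ℕ) :
    tribIter (m+3) = tribIter (m+2) ++ tribIter (m+1) ++ tribIter m := by
  induction m with
  | zero => decide
  | succ n ih =>
    show sig (tribIter (n+3)) = tribIter (n+3) ++ tribIter (n+2) ++ tribIter (n+1)
    conv_lhs => rw [ih]
    rw [sig_append, sig_append]; rfl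

lemma len_tribIter (j : ℕ) : (tribIter j).length = trib (j+2) := by
  induction j using Nat.strong_induction_on with
  | _ j ih =>
    match j with
    | 0 => rfl
    | 1 => rfl
    | 2 => rfl
    | (m+3) =>
      rw [tribIter_add3, List.length_append, List.length_append,
        ih (m+2) (by omega), ih (m+1) (by omega), ih m (by omega)]
      show trib (m+4) + trib (m+3) + trib (m+2) = trib (m+5)
      rw [show trib (m+5) = trib (m+4) + trib (m+3) + trib (m+2) from rfl]

lemma trib_pos (n : ℕ) : 0 < trib (n+1) := by
  induction n using Nat.strong_induction_on with
  | _ n ih =>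
    match n with
    | 0 => decide
    | 1 => decide
    | (m+2) =>
      show 0 < trib (m+3)
      rw [show trib (m+3) = trib (m+2) + trib (m+1) + trib m from rfl]
      have h2 : 0 < trib (m+2) := ih (m+1) (by omega)
      omega

lemma trib_ge (n : ℕ) : n + 1 ≤ trib (n+2) := by
  induction n using Nat.strong_induction_on with
  | _ n ih =>
    match n with
    | 0 => decide
    | (m+1) =>
      show m + 2 ≤ trib (m+3)
      rw [show trib (m+3) = trib (m+2) + trib (m+1) + trib m from rfl]
      have h1 : m + 1 ≤ trib (m+2) := ih m (by omega)
      have h2 := trib_pos m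
      omega

lemma tribIter_prefix (j : ℕ) : tribIter j <+: tribIter (j+1) := by
  match j with
  | 0 => decide
  | 1 => decide
  | (m+2) =>
    rw [show m+2+1 = m+3 from rfl, tribIter_add3]
    exact (List.prefix_append _ _).trans (List.prefix_append _ _)

lemma tribIter_prefix_le {j m : ℕ} (h : j ≤ m) : tribIter j <+: tribIter m := by
  induction m with
  | zero => simp_all
  | succ n ih =>
    rcases Nat.eq_or_lt_of_le h with rfl | h'
    · exact List.prefix_refl _
    · exact (ih (by omega)).trans (tribIter_prefix n)

lemma prefix_getD {u v : List ℕ} {i : ℕ} (h : u <+: v) (hi : i < u.length) :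
    u.getD i 0 = v.getD i 0 := by
  obtain ⟨t, rfl⟩ := h
  rw [List.getD_append _ _ _ _ hi]

/-- `u` is a prefix of the infinite Tribonacci word. -/
def IsPref (u : List ℕ) : Prop := ∃ m, u <+: tribIter m

lemma isPref_getD {u : List ℕ} (h : IsPref u) {i : ℕ} (hi : i < u.length) :
    u.getD i 0 = tribWord i := by
  obtain ⟨m, h⟩ := h
  have hiu : i < (tribIter m).length := lt_of_lt_of_le hi h.length_le
  have hgrow : i < (tribIter (i+1)).length := by
    rw [len_tribIter]; have := trib_ge (i+1); omega
  rcases le_total m (i+1) with hm | hm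
  · rw [prefix_getD h hi, prefix_getD (tribIter_prefix_le hm) hiu]; rfl
  · rw [prefix_getD h hi, tribWord, prefix_getD (tribIter_prefix_le hm) hgrow]

lemma isPref_mono {u v : List ℕ} (h : u <+: v) (hv : IsPref v) : IsPref u := by
  obtain ⟨m, hm⟩ := hv; exact ⟨m, h.trans hm⟩

lemma isPref_sigma {u : List ℕ} (h : IsPref u) : IsPref (sig u) := by
  obtain ⟨m, t, ht⟩ := h
  exact ⟨m+1, sig t, by rw [tribIter_succ, ← ht, sig_append]⟩

lemma sig_head (r : List ℕ) (hr : r ≠ []) : ∃ s, sig r = 0 :: s := by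
  match r with
  | c :: r' =>
    refine ⟨(tribMap c).tail ++ sig r', ?_⟩
    show tribMap c ++ sig r' = _
    unfold tribMap
    split_ifs <;> rfl

lemma isPref_sigma0 {u : List ℕ} (h : IsPref u) : IsPref (sig u ++ [0]) := by
  obtain ⟨m₀, hm₀⟩ := h
  set m := m₀ + u.length + 1 with hm
  have hpre : u <+: tribIter m := hm₀.trans (tribIter_prefix_le (by omega))
  obtain ⟨t, ht⟩ := hpre
  have hlen : u.length < (tribIter m).length := by
    rw [len_tribIter]
    calc u.length < m + 1 := by omega
    _ ≤ trib (m+2) := trib_ge m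
  have htne : t ≠ [] := by
    rintro rfl; rw [← ht] at hlen; simp at hlen
  obtain ⟨s, hs⟩ := sig_head t htne
  refine ⟨m+1, s, ?_⟩
  rw [tribIter_succ, ← ht, sig_append, hs]
  simp



/-- The critical prefixes: `q 0 = [0]`, `q (j+1) = σ(q j) ++ [0]`. -/
def qw : ℕ → List ℕ
  | 0 => [0]
  | j+1 => sig (qw j) ++ [0]

/-- Length of the critical prefix. -/
def nn (j : ℕ) : ℕ := (qw j).length

lemma qw_succ (j : ℕ) : qw (j+1) = tribIter (j+1) ++ qw j := by
  induction j with
  | zero => decide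
  | succ n ih =>
    show sig (qw (n+1)) ++ [0] = tribIter (n+2) ++ qw (n+1)
    conv_lhs => rw [ih]
    rw [sig_append, List.append_assoc]
    rfl

lemma isPref_qw (j : ℕ) : IsPref (qw j) := by
  induction j with
  | zero => exact ⟨0, List.prefix_refl _⟩
  | succ n ih => exact isPref_sigma0 ih

lemma nn_succ (j : ℕ) : nn (j+1) = trib (j+3) + nn j := by
  rw [nn, qw_succ, List.length_append, len_tribIter j.succ, nn]

lemma nn_zero : nn 0 = 1 := rfl

lemma nn_lt (j : ℕ) : nn j < nn (j+1) := by
  rw [nn_succ]; have h : 0 < trib (j+3) := trib_pos (j+2); omega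

lemma nn_mono {j m : ℕ} (h : j ≤ m) : nn j ≤ nn m := by
  induction m with
  | zero => simp_all
  | succ n ih =>
    rcases Nat.eq_or_lt_of_le h with rfl | h'
    · rfl
    · exact le_trans (ih (by omega)) (le_of_lt (nn_lt n))

lemma nn_ge (j : ℕ) : j + 1 ≤ nn j := by
  induction j with
  | zero => rfl
  | succ n ih => have := nn_lt n; omega

lemma two_nn (j : ℕ) : 2 * nn j + 3 = trib (j+4) + trib (j+2) := by
  induction j with
  | zero => rfl
  | succ n ih =>
    rw [nn_succ]
    have e5 : trib (n+5) = trib (n+4) + trib (n+3) + trib (n+2) := rfl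
    have e4 : trib (n+4) = trib (n+3) + trib (n+2) + trib (n+1) := rfl
    show 2 * (trib (n+3) + nn n) + 3 = trib (n+5) + trib (n+3)
    omega

lemma tribWord_qw {j i : ℕ} (hi : i < nn j) : tribWord i = (qw j).getD i 0 :=
  (isPref_getD (isPref_qw j) hi).symm

/-- The occurrence of the prefix of length `nn j` at position `trib (j+3)`. -/
lemma occ (j : ℕ) {x : ℕ} (hx : x < nn j) : tribWord (trib (j+3) + x) = tribWord x := by
  have h1 : trib (j+3) + x < nn (j+1) := by rw [nn_succ]; omega
  rw [tribWord_qw h1, tribWord_qw hx, qw_succ]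
  have hlen : (tribIter (j+1)).length = trib (j+3) := len_tribIter (j+1)
  rw [List.getD_append_right _ _ _ _ (by omega : (tribIter (j+1)).length ≤ trib (j+3) + x)]
  rw [hlen]
  congr 1
  omega

/-- `trib (j+3)` is a period of the prefix of length `nn (j+1)`. -/
lemma period (j : ℕ) {i : ℕ} (hi : i + trib (j+3) < nn (j+1)) :
    tribWord i = tribWord (i + trib (j+3)) := by
  have hx : i < nn j := by rw [nn_succ] at hi; omega
  rw [Nat.add_comm i, occ j hx]

/-- The letter following the prefix `qw j`. -/
def cc (j : ℕ) : ℕ := if j % 3 = 0 then 1 else if j % 3 = 1 then 2 else 0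

lemma isPref_qc (j : ℕ) : IsPref (qw j ++ [cc j]) := by
  induction j with
  | zero => exact ⟨2, by decide⟩
  | succ n ih =>
    have h3 : n % 3 = 0 ∨ n % 3 = 1 ∨ n % 3 = 2 := by omega
    rcases h3 with h | h | h
    · -- cc n = 1, cc (n+1) = 2
      have hc : cc n = 1 := by simp [cc, h]
      have hc' : cc (n+1) = 2 := by simp [cc, Nat.add_mod, h]
      rw [hc] at ih
      have := isPref_sigma ih
      rw [sig_append] at this
      show IsPref (sig (qw n) ++ [0] ++ [cc (n+1)])
      rw [hc', List.append_assoc]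
      exact isPref_mono (by exact List.prefix_rfl) this
    · have hc : cc n = 2 := by simp [cc, h]
      have hc' : cc (n+1) = 0 := by simp [cc, Nat.add_mod, h]
      rw [hc] at ih
      have := isPref_sigma0 ih
      rw [sig_append] at this
      show IsPref (sig (qw n) ++ [0] ++ [cc (n+1)])
      rw [hc', List.append_assoc]
      rw [List.append_assoc] at this
      exact this
    · have hc : cc n = 0 := by simp [cc, h]
      have hc' : cc (n+1) = 1 := by simp [cc, Nat.add_mod, h]
      rw [hc] at ih
      have := isPref_sigma ih
      rw [sig_append] at this
      show IsPref (sig (qw n) ++ [0] ++ [cc (n+1)])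
      rw [hc', List.append_assoc]
      exact isPref_mono (by exact List.prefix_rfl) this

lemma tribWord_nn (j : ℕ) : tribWord (nn j) = cc j := by
  have h := isPref_getD (isPref_qc j) (i := nn j) (by simp [nn])
  rw [← h, List.getD_append_right _ _ _ _ (by simp [nn] : (qw j).length ≤ nn j)]
  simp [nn]

lemma cc_ne_one (j : ℕ) : cc j ≠ cc (j+1) := by
  have h3 : j % 3 = 0 ∨ j % 3 = 1 ∨ j % 3 = 2 := by omega
  rcases h3 with h | h | h <;> simp [cc, Nat.add_mod, h]

lemma cc_ne_two (j : ℕ) : cc j ≠ cc (j+2) := by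
  have h3 : j % 3 = 0 ∨ j % 3 = 1 ∨ j % 3 = 2 := by omega
  rcases h3 with h | h | h <;> simp [cc, Nat.add_mod, h]



/-- Minimality: no `q < trib (j+3)` is a period of the prefix of length `nn j + 1`. -/
lemma min_period : ∀ j q, 0 < q → q < trib (j+3) → ∃ i, i + q ≤ nn j ∧ tribWord i ≠ tribWord (i+q) := by
  intro j
  induction j using Nat.strong_induction_on with
  | _ j ih =>
  match j with
  | 0 =>
    intro q hq0 hq
    have h2 : trib (0+3) = 2 := rfl
    have hq1 : q = 1 := by omega
    subst hq1
    exact ⟨0, by rw [nn_zero], by decide⟩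
  | 1 =>
    intro q hq0 hq
    have h2 : trib (1+3) = 4 := rfl
    have h3 : nn 1 = 3 := rfl
    have hq4 : q < 4 := by omega
    interval_cases q
    · exact ⟨0, by omega, by decide⟩
    · exact ⟨1, by omega, by decide⟩
    · exact ⟨0, by omega, by decide⟩
  | (m+2) =>
    intro q hq0 hq
    by_contra hcon
    push_neg at hcon
    have hper : ∀ i, i + q ≤ nn (m+2) → tribWord i = tribWord (i + q) := by
      intro i hi
      by_contra hne
      exact absurd (hcon i hi) (by simpa using hne)
    have htr : trib (m+2+3) = trib (m+4) + trib (m+3) + trib (m+2) := rfl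
    have enn2 : nn (m+2) = trib (m+4) + nn (m+1) := nn_succ (m+1)
    have enn1 : nn (m+1) = trib (m+3) + nn m := nn_succ m
    -- sub-derivation: if trib (m+4) < q then d := q - trib (m+4) is a period of prefix nn (m+1)
    have hsub : trib (m+4) < q →
        ∀ i, i + (q - trib (m+4)) < nn (m+1) → tribWord i = tribWord (i + (q - trib (m+4))) := by
      intro hlt i hid
      have hocc : tribWord (trib (m+4) + (i + (q - trib (m+4)))) = tribWord (i + (q - trib (m+4))) :=
        occ (m+1) hid
      have heq : trib (m+4) + (i + (q - trib (m+4))) = i + q := by omega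
      rw [heq] at hocc
      have hiq : i + q ≤ nn (m+2) := by omega
      rw [hper i hiq, ← hocc]
    rcases Nat.lt_trichotomy q (trib (m+4)) with h1 | h1 | h1
    · -- q < trib (m+4) : use ih (m+1)
      obtain ⟨i, hi, hne⟩ := ih (m+1) (by omega) q hq0 (by exact h1)
      have : i + q ≤ nn (m+2) := le_trans hi (nn_mono (by omega))
      exact hne (hper i this)
    · -- q = trib (m+4)
      have hle : nn (m+1) + q ≤ nn (m+2) := by omega
      have hthis := hper (nn (m+1)) hle
      rw [tribWord_nn (m+1)] at hthis
      have heq : nn (m+1) + q = nn (m+2) := by omega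
      rw [heq, tribWord_nn (m+2)] at hthis
      exact cc_ne_one (m+1) hthis
    · -- trib (m+4) < q
      have hd0 : 0 < q - trib (m+4) := by omega
      have hdlt : q - trib (m+4) < trib (m+3) + trib (m+2) := by omega
      have hdper := hsub h1
      rcases Nat.lt_trichotomy (q - trib (m+4)) (trib (m+3)) with h2 | h2 | h2
      · -- d < trib (m+3) : use ih m
        obtain ⟨i, hi, hne⟩ := ih m (by omega) (q - trib (m+4)) hd0 (by exact h2)
        have : i + (q - trib (m+4)) < nn (m+1) := lt_of_le_of_lt hi (nn_lt m)
        exact hne (hdper i this)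
      · -- d = trib (m+3), i.e. q = trib (m+4) + trib (m+3)
        have hle : nn m + q ≤ nn (m+2) := by omega
        have hthis := hper (nn m) hle
        rw [tribWord_nn m] at hthis
        have heq : nn m + q = nn (m+2) := by omega
        rw [heq, tribWord_nn (m+2)] at hthis
        exact cc_ne_two m hthis
      · -- trib (m+3) < d : descend again
        have he0 : 0 < q - trib (m+4) - trib (m+3) := by omega
        have helt : q - trib (m+4) - trib (m+3) < trib (m+2) := by omega
        have heper : ∀ i, i + (q - trib (m+4) - trib (m+3)) < nn m →
            tribWord i = tribWord (i + (q - trib (m+4) - trib (m+3))) := by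
          intro i hie
          have hocc : tribWord (trib (m+3) + (i + (q - trib (m+4) - trib (m+3)))) =
              tribWord (i + (q - trib (m+4) - trib (m+3))) := occ m hie
          have heq : trib (m+3) + (i + (q - trib (m+4) - trib (m+3))) = i + (q - trib (m+4)) := by
            omega
          rw [heq] at hocc
          have hid : i + (q - trib (m+4)) < nn (m+1) := by omega
          rw [hdper i hid, ← hocc]
        rcases m with _ | m'
        · have h22 : trib (0+2) = 1 := rfl
          omega
        · obtain ⟨i, hi, hne⟩ := ih m' (by omega) (q - trib (m'+1+4) - trib (m'+1+3)) he0
            (by exact helt)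
          have : i + (q - trib (m'+1+4) - trib (m'+1+3)) < nn (m'+1) := lt_of_le_of_lt hi (nn_lt m')
          exact hne (heper i this)



lemma alpha_gt {α : ℝ} (hα : α^3 = α^2 + α + 1) : (1.8 : ℝ) < α := by
  nlinarith [sq_nonneg (α + 1/2), sq_nonneg (α - 1.8), sq_nonneg (α + 1.8), sq_nonneg α,
    sq_nonneg (α - 1), sq_nonneg (α + 1)]

lemma alpha_lt {α : ℝ} (hα : α^3 = α^2 + α + 1) : α < (1.9 : ℝ) := by
  nlinarith [sq_nonneg (α + 1/2), sq_nonneg (α - 1.9), sq_nonneg (α + 1.9), sq_nonneg α,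
    sq_nonneg (α - 1), sq_nonneg (α + 1)]

/-- The auxiliary sequence `u k = T (k+1) - α T k`. -/
noncomputable def useq (α : ℝ) (k : ℕ) : ℝ := (trib (k+1) : ℝ) - α * trib k

lemma useq_rec {α : ℝ} (hα : α^3 = α^2 + α + 1) (k : ℕ) :
    useq α (k+2) = (1-α) * useq α (k+1) - (1/α) * useq α k := by
  have h0 : (1.8:ℝ) < α := alpha_gt hα
  have hne : α ≠ 0 := by nlinarith
  have h3 : (trib (k+3) : ℝ) = trib (k+2) + trib (k+1) + trib k := by
    have : trib (k+3) = trib (k+2) + trib (k+1) + trib k := rfl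
    rw [this]; push_cast; ring
  unfold useq
  rw [show k+2+1 = k+3 from rfl, h3]
  field_simp
  ring_nf
  nlinarith [hα, sq_nonneg α, mul_self_nonneg ((trib (k+1):ℝ))]



/-- The Lyapunov invariant of the `useq` recurrence. -/
lemma hform_val {α : ℝ} (hα : α^3 = α^2 + α + 1) (k : ℕ) :
    (useq α (k+1))^2 - (1-α) * useq α (k+1) * useq α k + (1/α) * (useq α k)^2
      = (1/α)^(k+1) := by
  have h0 : (1.8:ℝ) < α := alpha_gt hα
  have hne : α ≠ 0 := by nlinarith
  induction k with
  | zero =>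
    have h00 : (trib 0 : ℝ) = 0 := by norm_num [trib]
    have h01 : (trib 1 : ℝ) = 1 := by norm_num [trib]
    have h02 : (trib 2 : ℝ) = 1 := by norm_num [trib]
    unfold useq
    rw [h00, h01, h02]
    field_simp
    ring_nf
    exact (mul_inv_cancel₀ hne).symm
  | succ n ih =>
    rw [useq_rec hα n]
    have : ∀ x y C : ℝ,
        ((1-α)*x - C*y)^2 - (1-α)*((1-α)*x - C*y)*x + C*x^2
          = C*(x^2 - (1-α)*x*y + C*y^2) := by intro x y C; ring
    rw [this (useq α (n+1)) (useq α n) (1/α), ih, pow_succ]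
    ring

lemma useq_bound {α : ℝ} (hα : α^3 = α^2 + α + 1) (k : ℕ) :
    (useq α (k+1))^2 + (useq α k)^2 ≤ 4 * (1/α)^(k+1) := by
  have h0 : (1.8:ℝ) < α := alpha_gt hα
  have h1 : α < (1.9:ℝ) := alpha_lt hα
  have hne : α ≠ 0 := by nlinarith
  have h := hform_val hα k
  set x := useq α (k+1)
  set y := useq α k
  have key : 3*α*(4*(1/α)^(k+1)) = 3*α*(x^2+y^2) + α*(3*x+2*(α-1)*y)^2
      + (12 - 3*α - 4*α*(α-1)^2)*y^2 := by
    rw [← h]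
    field_simp
    ring
  have hA : 0 ≤ α*(3*x+2*(α-1)*y)^2 := by positivity
  have hB : 0 ≤ (12 - 3*α - 4*α*(α-1)^2)*y^2 := by
    apply mul_nonneg _ (sq_nonneg y)
    nlinarith [sq_nonneg (α-1)]
  have h3α : (0:ℝ) < 3*α := by nlinarith
  have : 3*α*(x^2+y^2) ≤ 3*α*(4*(1/α)^(k+1)) := by linarith
  exact le_of_mul_le_mul_left this h3α

lemma s_bound {α : ℝ} (hα : α^3 = α^2 + α + 1) (k : ℕ) (hk : 1 ≤ k) :
    |(trib (k+2) : ℝ) - α^2 * trib k| ≤ 3 := by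
  have h0 : (1.8:ℝ) < α := alpha_gt hα
  have h1 : α < (1.9:ℝ) := alpha_lt hα
  have hs : (trib (k+2) : ℝ) - α^2 * trib k = useq α (k+1) + α * useq α k := by
    unfold useq; ring
  have hb := useq_bound hα k
  have hpow : (1/α)^(k+1) ≤ (1/α)^2 := by
    apply pow_le_pow_of_le_one (by positivity) (by rw [div_le_one] <;> nlinarith) (by omega)
  have hsq : ((trib (k+2) : ℝ) - α^2 * trib k)^2 ≤ 9 := by
    rw [hs]
    have e1 : (1/α)^2 = 1/α^2 := by rw [div_pow]; norm_num
    have e2 : α^2 * (1/α^2) = 1 := by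
      field_simp
    nlinarith [sq_nonneg (useq α (k+1) - α * useq α k), sq_nonneg (useq α (k+1) + α * useq α k),
      sq_nonneg (useq α k), sq_nonneg (useq α (k+1)), sq_nonneg α]
  have := abs_nonneg ((trib (k+2) : ℝ) - α^2 * trib k)
  nlinarith [sq_abs ((trib (k+2) : ℝ) - α^2 * trib k)]



lemma Lval {α : ℝ} (hα : α^3 = α^2 + α + 1) :
    5/2 + α⁻¹ + (1/2) * α⁻¹^2 - 1 = (α^2+1)/2 := by
  have h0 : (1.8:ℝ) < α := alpha_gt hα
  have hne : α ≠ 0 := by nlinarith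
  field_simp
  nlinarith [hα, sq_nonneg α]

lemma upper_j {α : ℝ} (hα : α^3 = α^2 + α + 1) (j : ℕ) :
    (nn (j+1) : ℝ) ≤ (α^2+1)/2 * trib (j+3) := by
  have hs := s_bound hα (j+3) (by omega)
  have h2 : 2 * nn (j+1) + 3 = trib (j+5) + trib (j+3) := two_nn (j+1)
  have h2R : 2 * (nn (j+1) : ℝ) + 3 = (trib (j+5) : ℝ) + trib (j+3) := by
    exact_mod_cast h2
  have habs := abs_le.mp hs
  have h5 : (trib (j+3+2) : ℝ) = (trib (j+5) : ℝ) := by norm_num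
  rw [h5] at habs
  nlinarith [habs.1, habs.2]

lemma lower_j {α : ℝ} (hα : α^3 = α^2 + α + 1) (j : ℕ) :
    (α^2+1)/2 * trib (j+3) - 3 ≤ (nn (j+1) : ℝ) := by
  have hs := s_bound hα (j+3) (by omega)
  have h2 : 2 * nn (j+1) + 3 = trib (j+5) + trib (j+3) := two_nn (j+1)
  have h2R : 2 * (nn (j+1) : ℝ) + 3 = (trib (j+5) : ℝ) + trib (j+3) := by
    exact_mod_cast h2
  have habs := abs_le.mp hs
  have h5 : (trib (j+3+2) : ℝ) = (trib (j+5) : ℝ) := by norm_num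
  rw [h5] at habs
  nlinarith [habs.1, habs.2]

/-- `trib (j+3)` is the least period of the prefix of length `nn (j+1)`. -/
lemma isLeast_period (j : ℕ) :
    IsLeast {q | IsPrefixPeriod (nn (j+1)) q} (trib (j+3)) := by
  constructor
  · refine ⟨trib_pos (j+2), ?_⟩
    intro i hi
    exact period j hi
  · rintro q ⟨hq0, hq⟩
    by_contra hlt
    push_neg at hlt
    obtain ⟨i, hi, hne⟩ := min_period j q hq0 hlt
    exact hne (hq i (lt_of_le_of_lt hi (nn_lt j)))

/-- Locate `n` between consecutive critical lengths. -/
lemma exists_j {n : ℕ} (hn : 2 ≤ n) : ∃ j, nn j < n ∧ n ≤ nn (j+1) := by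
  have hex : ∃ j, n ≤ nn (j+1) := ⟨n, by have := nn_ge (n+1); omega⟩
  obtain ⟨j₀, hj₀, hmin⟩ := Nat.findX hex
  match j₀, hj₀, hmin with
  | 0, hj₀, hmin => exact ⟨0, by rw [nn_zero]; omega, hj₀⟩
  | (m+1), hj₀, hmin =>
    refine ⟨m+1, ?_, hj₀⟩
    have := hmin m (by omega)
    omega



lemma mem_exponents (j : ℕ) :
    ((nn (j+1) : ℝ) / (trib (j+3) : ℝ)) ∈ tribPrefixExponents :=
  ⟨nn (j+1), trib (j+3), by have := nn_ge (j+1); omega, isLeast_period j, rfl⟩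

theorem main (α : ℝ) (hα : α^3 = α^2 + α + 1) :
    IsLUB tribPrefixExponents (5/2 + α⁻¹ + (1/2) * α⁻¹^2 - 1) := by
  rw [Lval hα]
  have h0 : (1.8:ℝ) < α := alpha_gt hα
  have hL1 : (1:ℝ) ≤ (α^2+1)/2 := by nlinarith
  constructor
  · -- upper bound
    rintro e ⟨n, p, hn, ⟨⟨hp0, hper⟩, hleast⟩, rfl⟩
    rcases Nat.lt_or_ge n 2 with hn2 | hn2
    · -- n = 1
      have hn1 : n = 1 := by omega
      subst hn1
      have hp1 : p ≤ 1 := hleast (by exact ⟨Nat.one_pos, fun k hk => by omega⟩)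
      have hp1' : p = 1 := by omega
      subst hp1'
      norm_num
      exact hL1
    · obtain ⟨j, hjl, hju⟩ := exists_j hn2
      -- p ≥ trib (j+3)
      have hp : trib (j+3) ≤ p := by
        by_contra hlt
        push_neg at hlt
        obtain ⟨i, hi, hne⟩ := min_period j p hp0 hlt
        exact hne (hper i (by omega))
      have htp : (0:ℝ) < trib (j+3) := by
        have := trib_pos (j+2); exact_mod_cast this
      have hpp : (0:ℝ) < p := by exact_mod_cast hp0
      have hup := upper_j hα j
      calc (n : ℝ) / p ≤ (nn (j+1) : ℝ) / trib (j+3) := by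
            apply div_le_div₀ (by positivity) (by exact_mod_cast hju) htp (by exact_mod_cast hp)
      _ ≤ (α^2+1)/2 := by
            rw [div_le_iff₀ htp]
            exact hup
  · -- least upper bound
    intro b hb
    by_contra hbl
    push_neg at hbl
    set ε := (α^2+1)/2 - b with hε
    have hε0 : 0 < ε := by simp [hε]; linarith
    obtain ⟨N, hN⟩ := exists_nat_gt ((3:ℝ)/ε)
    have hbN := hb (mem_exponents N)
    have htp : (0:ℝ) < trib (N+3) := by
      have := trib_pos (N+2); exact_mod_cast this
    have htN : (N:ℝ) ≤ (trib (N+3) : ℝ) := by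
      have := trib_ge (N+1)
      have h' : N + 2 ≤ trib (N+3) := this
      exact_mod_cast le_trans (by omega) h'
    have hlo := lower_j hα N
    -- (α²+1)/2 ≤ nn(N+1)/trib(N+3) + 3/trib(N+3) ≤ b + ε
    have h3T : (3:ℝ)/(trib (N+3)) < ε := by
      rw [div_lt_iff₀ htp]
      have h3ε : (3:ℝ) < ε * N := by
        rw [div_lt_iff₀ hε0] at hN
        calc (3:ℝ) < N * ε := hN
        _ = ε * N := by ring
      calc (3:ℝ) < ε * N := h3ε
      _ ≤ ε * trib (N+3) := by
            apply mul_le_mul_of_nonneg_left htN (le_of_lt hε0)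
    have hdiv : (α^2+1)/2 - 3/(trib (N+3)) ≤ (nn (N+1) : ℝ) / trib (N+3) := by
      have e : (α^2+1)/2 - 3/(trib (N+3) : ℝ)
          = ((α^2+1)/2 * trib (N+3) - 3)/(trib (N+3) : ℝ) := by
        field_simp
      rw [e]
      exact (div_le_div_iff_of_pos_right htp).mpr hlo
    have : (α^2+1)/2 < (α^2+1)/2 := by
      calc (α^2+1)/2 = ((α^2+1)/2 - 3/(trib (N+3))) + 3/(trib (N+3)) := by ring
      _ ≤ (nn (N+1) : ℝ) / trib (N+3) + 3/(trib (N+3)) := by linarith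
      _ < b + ε := by linarith
      _ = (α^2+1)/2 := by simp [hε]
    exact lt_irrefl _ this

end TCE

/-- The initial critical exponent of the Tribonacci word is `ρ - 1`, where
`ρ = 5/2 + α⁻¹ + α⁻²/2` and `α` is the real root of `x³ - x² - x - 1`. -/
theorem tribWord_initial_critical_exponent (α : ℝ) (hα : α^3 = α^2 + α + 1) :
    IsLUB tribPrefixExponents (5/2 + α⁻¹ + (1/2) * α⁻¹^2 - 1) := by
  exact TCE.main α hα
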